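/- For every q ∈ (0,1), log( 1 + (2/e^{1+γ})·(1/√(1−q) − 1) ) ≤ log S(q) ≤ log( 1 + (1/√(2e))·(1/√(1−q) − 1) ). -/

import Mathlib

/-- `ψ(y) = −γ + Σ_{k=1}^{y−1} 1/k` for a positive integer `y`. -/
noncomputable def psi (y : ℕ) : ℝ :=
  -Real.eulerMascheroniConstant + ∑ k ∈ Finset.Icc 1 (y - 1), (1 : ℝ) / k

/-- `g(0) = 0` and `g(y) = y·ψ(y)` for `y ≥ 1`. -/
noncomputable def g (y : ℕ) : ℝ := y * psi y

/-- The normalizing sum `S(q) = Σ_{y=0}^∞ e^{g(y)}·(q/e)^y / y!` of the digamma distribution. -/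
noncomputable def S (q : ℝ) : ℝ :=
  ∑' y : ℕ, Real.exp (g y) * (q / Real.exp 1) ^ y / Nat.factorial y

open Real Filter Topology Stirling

/-- `log x ≤ (x - x⁻¹)/2` for `x ≥ 1`. -/
lemma my_log_le_half (x : ℝ) (hx : 1 ≤ x) : Real.log x ≤ (x - x⁻¹) / 2 := by
  have key : MonotoneOn (fun x : ℝ => (x - x⁻¹) / 2 - Real.log x) (Set.Ici 1) := by
    apply monotoneOn_of_deriv_nonneg (convex_Ici 1)
    · apply ContinuousOn.sub
      · fun_prop (disch := intro x hx; simp at hx ⊢; nlinarith)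
      · apply ContinuousOn.log continuousOn_id
        intro x hx; simp at hx ⊢; linarith
    · intro x hx
      simp only [interior_Ici, Set.mem_Ioi] at hx
      apply DifferentiableAt.differentiableWithinAt
      have hx0 : x ≠ 0 := by linarith
      fun_prop (disch := assumption)
    · intro x hx
      simp only [interior_Ici, Set.mem_Ioi] at hx
      have hx0 : x ≠ 0 := by linarith
      have h1 : HasDerivAt (fun x : ℝ => (x - x⁻¹) / 2 - Real.log x)
          ((1 - -(x^2)⁻¹) / 2 - x⁻¹) x := by
        exact (((hasDerivAt_id x).sub (hasDerivAt_inv hx0)).div_const 2).sub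
          (Real.hasDerivAt_log hx0)
      rw [h1.deriv]
      have : (1 - -(x ^ 2)⁻¹) / 2 - x⁻¹ = (1 - x⁻¹)^2 / 2 := by
        field_simp; ring
      rw [this]; positivity
  have := key (Set.mem_Ici.2 le_rfl) (Set.mem_Ici.2 hx) hx
  simp only [Real.log_one, inv_one] at this
  linarith

/-- `2(x-1)/(x+1) ≤ log x` for `x ≥ 1`. -/
lemma my_le_log (x : ℝ) (hx : 1 ≤ x) : 2 * (x - 1) / (x + 1) ≤ Real.log x := by
  have key : MonotoneOn (fun x : ℝ => Real.log x - 2 * (x - 1) / (x + 1)) (Set.Ici 1) := by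
    apply monotoneOn_of_deriv_nonneg (convex_Ici 1)
    · apply ContinuousOn.sub
      · apply ContinuousOn.log continuousOn_id
        intro x hx; simp at hx ⊢; linarith
      · fun_prop (disch := intro x hx; simp at hx ⊢; nlinarith)
    · intro x hx
      simp only [interior_Ici, Set.mem_Ioi] at hx
      have hx0 : x ≠ 0 := by linarith
      have hx1 : x + 1 ≠ 0 := by linarith
      apply DifferentiableAt.differentiableWithinAt
      fun_prop (disch := assumption)
    · intro x hx
      simp only [interior_Ici, Set.mem_Ioi] at hx
      have hx0 : x ≠ 0 := by linarith
      have hx1 : x + 1 ≠ 0 := by linarith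
      have h1 : HasDerivAt (fun x : ℝ => Real.log x - 2 * (x - 1) / (x + 1))
          (x⁻¹ - (2 * 1 * (x + 1) - 2 * (x - 1) * 1) / (x + 1)^2) x := by
        apply (Real.hasDerivAt_log hx0).sub
        exact (((hasDerivAt_id x).sub_const 1).const_mul 2).div
          ((hasDerivAt_id x).add_const 1) hx1
      rw [h1.deriv]
      rw [show x⁻¹ - (2 * 1 * (x + 1) - 2 * (x - 1) * 1) / (x + 1)^2
          = (x - 1)^2 / (x * (x+1)^2) by field_simp; ring]
      positivity
  have := key (Set.mem_Ici.2 le_rfl) (Set.mem_Ici.2 hx) hx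
  simp only [Real.log_one] at this
  linarith


lemma half_inv_tendsto : Tendsto (fun m : ℕ => 1 / (2 * (m:ℝ))) atTop (𝓝 0) := by
  have h := tendsto_one_div_atTop_nhds_zero_nat.const_mul (1/2 : ℝ)
  rw [mul_zero] at h
  convert h using 2 with m
  rw [div_mul_div_comm, one_mul, mul_comm]

/-- upper bound: `harmonic n - log n - 1/(2n) ≤ γ` for `n ≥ 1`. -/
lemma harm_upper (n : ℕ) (hn : 1 ≤ n) :
    (harmonic n : ℝ) - Real.log n - 1 / (2 * n) ≤ Real.eulerMascheroniConstant := by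
  set U : ℕ → ℝ := fun m => (harmonic m : ℝ) - Real.log m - 1 / (2 * m) with hU
  have hstep : ∀ m : ℕ, 1 ≤ m → U m ≤ U (m + 1) := by
    intro m hm
    have hm0 : (0 : ℝ) < m := by exact_mod_cast hm
    have hlog : Real.log ((m + 1 : ℝ) / m) ≤ ((m+1:ℝ)/m - ((m+1:ℝ)/m)⁻¹) / 2 := by
      apply my_log_le_half
      rw [le_div_iff₀ hm0]; linarith
    rw [Real.log_div (by positivity) (by positivity)] at hlog
    have hinv : ((m+1:ℝ)/m)⁻¹ = (m:ℝ)/(m+1) := by rw [inv_div]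
    rw [hinv] at hlog
    have hrhs : ((m+1:ℝ)/m - (m:ℝ)/(m+1)) / 2 = 1/(2*m) + 1/(2*(m+1)) := by
      field_simp; ring
    rw [hrhs] at hlog
    have hharm : (harmonic (m+1) : ℝ) = (harmonic m : ℝ) + 1/(m+1) := by
      rw [harmonic_succ]; push_cast; rw [one_div]
    have hkey : 1/(2*((m:ℝ)+1)) + 1/(2*((m:ℝ)+1)) = 1/((m:ℝ)+1) := by
      field_simp
      norm_num
    simp only [hU]
    push_cast
    rw [hharm]
    linarith
  have hmono : ∀ m k : ℕ, 1 ≤ m → m ≤ k → U m ≤ U k := by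
    intro m k hm hmk
    induction k, hmk using Nat.le_induction with
    | base => exact le_rfl
    | succ k hmk ih => exact ih.trans (hstep k (hm.trans hmk))
  have hlim : Tendsto U atTop (𝓝 Real.eulerMascheroniConstant) := by
    have h := Real.tendsto_harmonic_sub_log.sub half_inv_tendsto
    rw [sub_zero] at h
    exact h
  exact ge_of_tendsto hlim (eventually_atTop.2 ⟨n, fun k hk => hmono n k hn hk⟩)

/-- lower bound: `γ ≤ harmonic n - log (n + 1/2)` for all `n`. -/
lemma harm_lower (n : ℕ) :
    Real.eulerMascheroniConstant ≤ (harmonic n : ℝ) - Real.log ((n:ℝ) + 1/2) := by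
  set T : ℕ → ℝ := fun m => (harmonic m : ℝ) - Real.log ((m:ℝ) + 1/2) with hT
  have hstep : ∀ m : ℕ, T (m + 1) ≤ T m := by
    intro m
    have hm0 : (0 : ℝ) ≤ m := Nat.cast_nonneg m
    have hx1 : (1:ℝ) ≤ ((m:ℝ) + 3/2) / ((m:ℝ) + 1/2) := by
      rw [le_div_iff₀ (by linarith)]; linarith
    have hlog := my_le_log _ hx1
    rw [Real.log_div (by linarith) (by linarith)] at hlog
    have hlhs : 2 * (((m:ℝ) + 3/2) / ((m:ℝ) + 1/2) - 1) / (((m:ℝ) + 3/2) / ((m:ℝ) + 1/2) + 1)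
        = 1 / ((m:ℝ) + 1) := by
      have hd1 : ((m:ℝ) + 1/2) ≠ 0 := by linarith
      have hd2 : ((m:ℝ) + 1) ≠ 0 := by linarith
      field_simp
      ring
    rw [hlhs] at hlog
    have hharm : (harmonic (m+1) : ℝ) = (harmonic m : ℝ) + 1/(m+1) := by
      rw [harmonic_succ]; push_cast; rw [one_div]
    simp only [hT]
    push_cast
    rw [hharm]
    have : ((m:ℝ) + 1) + 1/2 = (m:ℝ) + 3/2 := by ring
    rw [this]
    linarith
  have hanti : ∀ m k : ℕ, m ≤ k → T k ≤ T m := by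
    intro m k hmk
    induction k, hmk using Nat.le_induction with
    | base => exact le_rfl
    | succ k hmk ih => exact (hstep k).trans ih
  have hlim : Tendsto T atTop (𝓝 Real.eulerMascheroniConstant) := by
    have h2 : Tendsto (fun m : ℕ => Real.log (((m:ℝ) + 1/2) / m)) atTop (𝓝 0) := by
      rw [← Real.log_one]
      apply Tendsto.log _ (by norm_num)
      have : Tendsto (fun m : ℕ => 1 + 1/(2 * (m:ℝ))) atTop (𝓝 (1 + 0)) :=
        tendsto_const_nhds.add half_inv_tendsto
      rw [add_zero] at this
      apply this.congr'
      filter_upwards [eventually_ge_atTop 1] with m hm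
      have hm0 : (0:ℝ) < m := by exact_mod_cast hm
      field_simp
    have h3 : Tendsto (fun m : ℕ => (harmonic m : ℝ) - Real.log m
        - Real.log (((m:ℝ) + 1/2) / m)) atTop (𝓝 Real.eulerMascheroniConstant) := by
      simpa using Real.tendsto_harmonic_sub_log.sub h2
    apply h3.congr'
    filter_upwards [eventually_ge_atTop 1] with m hm
    have hm0 : (0:ℝ) < m := by exact_mod_cast hm
    rw [Real.log_div (by linarith) (by linarith)]
    simp only [hT]
    ring
  exact le_of_tendsto hlim (eventually_atTop.2 ⟨n, fun k hk => hanti n k hk⟩)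


lemma psi_eq (y : ℕ) : psi y = -Real.eulerMascheroniConstant + (harmonic (y - 1) : ℝ) := by
  rw [psi, harmonic_eq_sum_Icc]
  push_cast
  simp [one_div]

lemma psi_succ_eq (y : ℕ) :
    psi (y + 1) = -Real.eulerMascheroniConstant + (harmonic y : ℝ) := by
  rw [psi_eq]; simp

/-- lower bound consequence : `γ + 1/(2n+1) ≤ harmonic n - log n` -/
lemma harm_lower' (n : ℕ) (hn : 1 ≤ n) :
    Real.eulerMascheroniConstant + 1 / (2 * (n:ℝ) + 1) ≤ (harmonic n : ℝ) - Real.log n := by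
  have h1 := harm_lower n
  have hn0 : (0:ℝ) < n := by exact_mod_cast hn
  have hx : (1:ℝ) ≤ ((n:ℝ) + 1/2) / n := by rw [le_div_iff₀ hn0]; linarith
  have h2 := my_le_log _ hx
  rw [Real.log_div (by linarith) (by positivity)] at h2
  have h3 : 2 * (((n:ℝ) + 1/2) / n - 1) / (((n:ℝ) + 1/2) / n + 1) = 1 / (2 * (n:ℝ) + 1/2) := by
    have hd : (n:ℝ) ≠ 0 := hn0.ne'
    have hd2 : 2 * (n:ℝ) + 1/2 ≠ 0 := by positivity
    field_simp
    ring
  rw [h3] at h2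
  have h4 : 1 / (2 * (n:ℝ) + 1) ≤ 1 / (2 * (n:ℝ) + 1/2) := by
    apply one_div_le_one_div_of_le (by positivity) (by linarith)
  linarith

lemma tendsto_n_div : Tendsto (fun n : ℕ => (n:ℝ) / (2 * n + 1)) atTop (𝓝 (1/2)) := by
  have h : Tendsto (fun n : ℕ => (2 + 1/(n:ℝ))⁻¹) atTop (𝓝 ((2:ℝ) + 0)⁻¹) := by
    exact (Tendsto.inv₀ (tendsto_const_nhds.add tendsto_one_div_atTop_nhds_zero_nat)
      (by norm_num))
  norm_num at h
  apply h.congr'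
  filter_upwards [eventually_ge_atTop 1] with n hn
  have hn0 : (0:ℝ) < n := by exact_mod_cast hn
  rw [eq_div_iff (by positivity)]
  field_simp

/-- `n (harmonic n - γ - log n) → 1/2`. -/
lemma tendsto_V : Tendsto
    (fun n : ℕ => (n:ℝ) * ((harmonic n : ℝ) - Real.eulerMascheroniConstant - Real.log n))
    atTop (𝓝 (1/2)) := by
  apply tendsto_of_tendsto_of_tendsto_of_le_of_le' tendsto_n_div tendsto_const_nhds
  · filter_upwards [eventually_ge_atTop 1] with n hn
    have hn0 : (0:ℝ) < n := by exact_mod_cast hn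
    have h := harm_lower' n hn
    have h2 : (n:ℝ) / (2*n+1) = (n:ℝ) * (1/(2*(n:ℝ)+1)) := by ring
    rw [h2]
    have : 1/(2*(n:ℝ)+1) ≤ (harmonic n : ℝ) - Real.eulerMascheroniConstant - Real.log n := by
      linarith
    exact mul_le_mul_of_nonneg_left this hn0.le
  · filter_upwards [eventually_ge_atTop 1] with n hn
    have hn0 : (0:ℝ) < n := by exact_mod_cast hn
    have h := harm_upper n hn
    have : (harmonic n : ℝ) - Real.eulerMascheroniConstant - Real.log n ≤ 1/(2*(n:ℝ)) := by
      linarith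
    calc (n:ℝ) * ((harmonic n : ℝ) - Real.eulerMascheroniConstant - Real.log n)
        ≤ (n:ℝ) * (1/(2*(n:ℝ))) := mul_le_mul_of_nonneg_left this hn0.le
      _ = 1/2 := by
          rw [mul_one_div, div_eq_div_iff (by positivity) (by norm_num)]
          ring
  
/-- `y (psi y - log y) → -1/2`. -/
lemma tendsto_W : Tendsto (fun y : ℕ => (y:ℝ) * (psi y - Real.log y)) atTop (𝓝 (-(1/2))) := by
  have h : Tendsto
      (fun n : ℕ => (n:ℝ) * ((harmonic n : ℝ) - Real.eulerMascheroniConstant - Real.log n) - 1)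
      atTop (𝓝 (1/2 - 1)) := tendsto_V.sub tendsto_const_nhds
  norm_num at h
  apply h.congr'
  filter_upwards [eventually_ge_atTop 1] with y hy
  have hy0 : (0:ℝ) < y := by exact_mod_cast hy
  obtain ⟨m, rfl⟩ := Nat.exists_eq_add_of_le' hy
  rw [psi_succ_eq]
  push_cast
  have hharm : (harmonic (m+1) : ℝ) = (harmonic m : ℝ) + 1/((m:ℝ)+1) := by
    rw [harmonic_succ]
    push_cast
    simp [one_div]
  rw [hharm]
  have hne : ((m:ℝ)+1) ≠ 0 := by positivity
  push_cast
  field_simp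
  ring


noncomputable def cc (y : ℕ) : ℝ := Real.exp (g y - y) / (y.factorial : ℝ)
noncomputable def aa (y : ℕ) : ℝ := (Nat.centralBinom y : ℝ) / 4 ^ y
noncomputable def rho (y : ℕ) : ℝ := cc y / aa y

lemma cc_pos (y : ℕ) : 0 < cc y := by
  apply div_pos (Real.exp_pos _)
  exact_mod_cast Nat.factorial_pos y

lemma aa_pos (y : ℕ) : 0 < aa y := by
  apply div_pos _ (by positivity)
  exact_mod_cast Nat.centralBinom_pos y

lemma centralBinom_le_four_pow (n : ℕ) : Nat.centralBinom n ≤ 4 ^ n := by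
  have h : Nat.centralBinom n ≤ ∑ i ∈ Finset.range (2*n + 1), (2*n).choose i := by
    rw [Nat.centralBinom_eq_two_mul_choose]
    apply Finset.single_le_sum (f := fun i => (2*n).choose i) (fun i _ => Nat.zero_le _)
    simp [Nat.lt_succ_iff]; omega
  rw [Nat.sum_range_choose] at h
  calc Nat.centralBinom n ≤ 2 ^ (2*n) := h
    _ = 4 ^ n := by rw [pow_mul]; norm_num

lemma aa_le_one (y : ℕ) : aa y ≤ 1 := by
  rw [aa, div_le_one (by positivity)]
  exact_mod_cast centralBinom_le_four_pow y

lemma cc_zero : cc 0 = 1 := by simp [cc, g]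
lemma aa_zero : aa 0 = 1 := by simp [aa, Nat.centralBinom]
lemma cc_one : cc 1 = Real.exp (-(1 + Real.eulerMascheroniConstant)) := by
  have : psi 1 = -Real.eulerMascheroniConstant := by
    rw [psi]; simp
  simp [cc, g, this]
  ring_nf
lemma aa_one : aa 1 = 1 / 2 := by
  have : Nat.centralBinom 1 = 2 := rfl
  rw [aa, this]; norm_num
lemma rho_one : rho 1 = 2 * Real.exp (-(1 + Real.eulerMascheroniConstant)) := by
  rw [rho, cc_one, aa_one]
  ring

lemma g_succ (y : ℕ) (hy : 1 ≤ y) : g (y + 1) = g y + psi (y + 1) + 1 := by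
  obtain ⟨m, rfl⟩ := Nat.exists_eq_add_of_le' hy
  rw [g, g, psi_succ_eq, psi_succ_eq]
  have hharm : (harmonic (m+1) : ℝ) = (harmonic m : ℝ) + 1/((m:ℝ)+1) := by
    rw [harmonic_succ]; push_cast; simp [one_div]
  rw [hharm]
  have hne : ((m:ℝ)+1) ≠ 0 := by positivity
  push_cast
  field_simp
  ring

lemma cc_succ (y : ℕ) (hy : 1 ≤ y) :
    cc (y + 1) = cc y * Real.exp (psi (y + 1)) / (y + 1) := by
  rw [cc, cc, g_succ y hy, Nat.factorial_succ]
  have h1 : g y + psi (y+1) + 1 - (↑(y+1)) = (g y - y) + psi (y+1) := by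
    push_cast; ring
  rw [h1, Real.exp_add]
  have hf : (0:ℝ) < y.factorial := by exact_mod_cast Nat.factorial_pos y
  have hy1 : ((y:ℝ)+1) ≠ 0 := by positivity
  push_cast
  field_simp

lemma aa_succ (y : ℕ) : aa (y + 1) = aa y * ((2 * y + 1) / (2 * (y + 1))) := by
  have h := Nat.succ_mul_centralBinom_succ y
  have hcast : ((y:ℝ) + 1) * (Nat.centralBinom (y+1) : ℝ)
      = 2 * (2 * y + 1) * (Nat.centralBinom y : ℝ) := by exact_mod_cast h
  rw [aa, aa]
  have hy1 : ((y:ℝ)+1) ≠ 0 := by positivity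
  have h4 : ((4:ℝ)) ^ (y+1) = 4 * 4 ^ y := by ring
  rw [h4]
  have h40 : ((4:ℝ))^y ≠ 0 := by positivity
  field_simp
  linear_combination 2 * hcast

lemma rho_succ (y : ℕ) (hy : 1 ≤ y) :
    rho (y + 1) = rho y * (2 * Real.exp (psi (y + 1)) / (2 * y + 1)) := by
  rw [rho, rho, cc_succ y hy, aa_succ y]
  have h1 : (0:ℝ) < 2 * y + 1 := by positivity
  have h2 : (0:ℝ) < (y:ℝ) + 1 := by positivity
  have h3 : aa y ≠ 0 := (aa_pos y).ne'
  field_simp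

lemma psi_succ_ge (y : ℕ) : Real.log ((y:ℝ) + 1/2) ≤ psi (y + 1) := by
  rw [psi_succ_eq]
  have := harm_lower y
  linarith

lemma rho_le_succ (y : ℕ) (hy : 1 ≤ y) : rho y ≤ rho (y + 1) := by
  rw [rho_succ y hy]
  have hrpos : 0 < rho y := div_pos (cc_pos y) (aa_pos y)
  have hkey : (1:ℝ) ≤ 2 * Real.exp (psi (y + 1)) / (2 * y + 1) := by
    rw [le_div_iff₀ (by positivity)]
    have h1 : (y:ℝ) + 1/2 ≤ Real.exp (psi (y+1)) := by
      have := psi_succ_ge y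
      calc (y:ℝ) + 1/2 = Real.exp (Real.log ((y:ℝ) + 1/2)) := by
            rw [Real.exp_log (by positivity)]
        _ ≤ Real.exp (psi (y+1)) := Real.exp_le_exp.2 this
    linarith
  nlinarith

lemma rho_mono (m n : ℕ) (hm : 1 ≤ m) (hmn : m ≤ n) : rho m ≤ rho n := by
  induction n, hmn using Nat.le_induction with
  | base => exact le_rfl
  | succ n hmn ih => exact ih.trans (rho_le_succ n (hm.trans hmn))


lemma stirling_pos (n : ℕ) (hn : 1 ≤ n) : 0 < stirlingSeq n := by
  obtain ⟨m, rfl⟩ := Nat.exists_eq_add_of_le' hn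
  exact stirlingSeq'_pos m

lemma fact_eq (n : ℕ) (hn : 1 ≤ n) :
    (n.factorial : ℝ) = stirlingSeq n * (Real.sqrt (2*n) * ((n:ℝ)/Real.exp 1)^n) := by
  have hn0 : (0:ℝ) < n := by exact_mod_cast hn
  rw [stirlingSeq]
  field_simp

lemma pow_div_exp_eq (n : ℕ) (hn : 1 ≤ n) :
    ((n:ℝ)/Real.exp 1)^n = Real.exp ((n:ℝ) * (Real.log n - 1)) := by
  have hn0 : (0:ℝ) < n := by exact_mod_cast hn
  have hpos : (0:ℝ) < ((n:ℝ)/Real.exp 1)^n := by positivity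
  rw [← Real.exp_log hpos, Real.log_pow, Real.log_div hn0.ne' (Real.exp_ne_zero 1),
    Real.log_exp]

lemma rho_id (y : ℕ) (hy : 1 ≤ y) :
    rho y = Real.exp ((y:ℝ) * (psi y - Real.log y)) * stirlingSeq y
      / (stirlingSeq (2*y) * Real.sqrt 2) := by
  have hy0 : (0:ℝ) < y := by exact_mod_cast hy
  have h2y : 1 ≤ 2*y := by omega
  have hst1 : 0 < stirlingSeq y := stirling_pos y hy
  have hst2 : 0 < stirlingSeq (2*y) := stirling_pos (2*y) h2y
  have hF1 : (0:ℝ) < (y.factorial : ℝ) := by exact_mod_cast y.factorial_pos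
  have hF2 : (0:ℝ) < ((2*y).factorial : ℝ) := by exact_mod_cast (2*y).factorial_pos
  have hB : (0:ℝ) < (Nat.centralBinom y : ℝ) := by exact_mod_cast Nat.centralBinom_pos y
  -- CB y * (y! * y!) = (2y)!
  have hCB : (Nat.centralBinom y : ℝ) * ((y.factorial:ℝ) * (y.factorial:ℝ))
      = ((2*y).factorial : ℝ) := by
    have := Nat.choose_mul_factorial_mul_factorial (show y ≤ 2*y by omega)
    rw [show 2*y - y = y by omega] at this
    rw [Nat.centralBinom_eq_two_mul_choose, ← mul_assoc]
    exact_mod_cast this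
  -- sqrt identity
  have hsq : Real.sqrt (2*(2*y:ℕ)) = Real.sqrt 2 * Real.sqrt (2*y) := by
    push_cast
    rw [← Real.sqrt_mul (by norm_num)]
  have hsqpos : 0 < Real.sqrt (2*(y:ℝ)) := Real.sqrt_pos.2 (by positivity)
  -- the exp/pow identities
  have hpy := pow_div_exp_eq y hy
  have hp2y := pow_div_exp_eq (2*y) h2y
  have h4 : ((4:ℝ))^y = Real.exp ((y:ℝ) * Real.log 4) := by
    have : (0:ℝ) < (4:ℝ)^y := by positivity
    rw [← Real.exp_log this, Real.log_pow]
  have hlog4 : Real.log 4 = 2 * Real.log 2 := by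
    rw [show (4:ℝ) = 2^2 by norm_num, Real.log_pow]
    push_cast; ring
  have hlog2y : Real.log ((2*y:ℕ):ℝ) = Real.log 2 + Real.log y := by
    push_cast
    rw [Real.log_mul (by norm_num) hy0.ne']
  -- factorial identities
  have hf1 := fact_eq y hy
  have hf2 := fact_eq (2*y) h2y
  rw [rho, cc, aa]
  rw [div_div_div_comm]
  rw [hf2] at hCB
  -- express CB y
  have hCBeq : (Nat.centralBinom y : ℝ)
      = stirlingSeq (2*y) * (Real.sqrt (2*(2*y:ℕ)) * (((2*y:ℕ):ℝ)/Real.exp 1)^(2*y))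
        / ((y.factorial:ℝ) * (y.factorial:ℝ)) := by
    field_simp at hCB ⊢
    linarith [hCB]
  rw [hCBeq, hf1, hsq, hp2y, hpy, h4]
  rw [show ((2*y:ℕ):ℝ) = 2*(y:ℝ) by push_cast; ring] at hlog2y ⊢
  have hEy : Real.exp ((y:ℝ) * (Real.log y - 1)) > 0 := Real.exp_pos _
  have key : Real.exp (g y - y) * Real.exp ((y:ℝ)*Real.log 4) * Real.exp ((y:ℝ)*(Real.log y - 1))
      = Real.exp ((y:ℝ)*(psi y - Real.log y)) * Real.exp (2*(y:ℝ)*(Real.log (2*(y:ℝ)) - 1)) := by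
    rw [← Real.exp_add, ← Real.exp_add, ← Real.exp_add, Real.exp_eq_exp, hlog2y, hlog4, g]
    ring
  field_simp
  linear_combination (norm := ring_nf) key


lemma rho_tendsto : Tendsto rho atTop (𝓝 (1 / Real.sqrt (2 * Real.exp 1))) := by
  have h1 : Tendsto (fun y : ℕ => Real.exp ((y:ℝ) * (psi y - Real.log y))) atTop
      (𝓝 (Real.exp (-(1/2)))) := (Real.continuous_exp.tendsto _).comp tendsto_W
  have h2 := tendsto_stirlingSeq_sqrt_pi
  have hdouble : Tendsto (fun y : ℕ => 2*y) atTop atTop :=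
    Filter.tendsto_atTop_atTop.2 (fun b => ⟨b, fun a ha => by omega⟩)
  have h3 : Tendsto (fun y : ℕ => stirlingSeq (2*y)) atTop (𝓝 (Real.sqrt π)) :=
    h2.comp hdouble
  have hpi : Real.sqrt π ≠ 0 := by
    have := Real.pi_pos
    positivity
  have h4 : Tendsto (fun y : ℕ => Real.exp ((y:ℝ) * (psi y - Real.log y)) * stirlingSeq y
      / (stirlingSeq (2*y) * Real.sqrt 2)) atTop
      (𝓝 (Real.exp (-(1/2)) * Real.sqrt π / (Real.sqrt π * Real.sqrt 2))) :=
    (h1.mul h2).div (h3.mul tendsto_const_nhds) (by positivity)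
  have hval : Real.exp (-(1/2)) * Real.sqrt π / (Real.sqrt π * Real.sqrt 2)
      = 1 / Real.sqrt (2 * Real.exp 1) := by
    rw [Real.sqrt_mul (by norm_num), ← Real.exp_half]
    have he : (0:ℝ) < Real.exp (1/2) := Real.exp_pos _
    have hs2 : (0:ℝ) < Real.sqrt 2 := by positivity
    have hexp : Real.exp (-(1/2)) = (Real.exp (1/2))⁻¹ := by
      rw [← Real.exp_neg]
    rw [hexp]
    field_simp
  rw [← hval]
  apply h4.congr'
  filter_upwards [eventually_ge_atTop 1] with y hy
  exact (rho_id y hy).symm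

lemma rho_le (y : ℕ) (hy : 1 ≤ y) : rho y ≤ 1 / Real.sqrt (2 * Real.exp 1) :=
  ge_of_tendsto rho_tendsto (eventually_atTop.2 ⟨y, fun k hk => rho_mono y k hy hk⟩)

lemma rho_ge (y : ℕ) (hy : 1 ≤ y) : 2 * Real.exp (-(1 + Real.eulerMascheroniConstant)) ≤ rho y := by
  rw [← rho_one]
  exact rho_mono 1 y le_rfl hy


lemma harec (k : ℕ) : 2 * ((k:ℝ) + 1) * aa (k+1) = (2*(k:ℝ)+1) * aa k := by
  rw [aa_succ]
  have : ((k:ℝ)+1) ≠ 0 := by positivity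
  field_simp

lemma conv (n : ℕ) : ∑ k ∈ Finset.range (n+1), aa k * aa (n-k) = 1 := by
  induction n with
  | zero => simp [aa_zero]
  | succ n ih =>
    set s1 : ℝ := ∑ k ∈ Finset.range (n+2), aa k * aa (n+1-k) with hs1
    -- reflection on range (n+2)
    have refl1 : ∑ k ∈ Finset.range (n+2), (2*((n:ℝ)+1-(k:ℝ))) * (aa k * aa (n+1-k))
        = ∑ k ∈ Finset.range (n+2), (2*(k:ℝ)) * (aa k * aa (n+1-k)) := by
      rw [← Finset.sum_range_reflect (fun j => (2*(j:ℝ)) * (aa j * aa (n+1-j))) (n+2)]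
      apply Finset.sum_congr rfl
      intro j hj
      simp only [Finset.mem_range] at hj
      have h1 : n + 2 - 1 - j = n + 1 - j := by omega
      have h2 : n + 1 - (n + 1 - j) = j := by omega
      have h3 : ((n + 1 - j : ℕ) : ℝ) = (n:ℝ) + 1 - (j:ℝ) := by
        push_cast [Nat.cast_sub (by omega : j ≤ n+1)]
        ring
      rw [h1, h2, h3]
      ring
    have expand : (2*((n:ℝ)+1)) * s1
        = ∑ k ∈ Finset.range (n+2), (2*(k:ℝ)) * (aa k * aa (n+1-k))
          + ∑ k ∈ Finset.range (n+2), (2*((n:ℝ)+1-(k:ℝ))) * (aa k * aa (n+1-k)) := by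
      rw [hs1, Finset.mul_sum, ← Finset.sum_add_distrib]
      apply Finset.sum_congr rfl
      intro k _
      ring
    -- shift the first sum
    have shift : ∑ k ∈ Finset.range (n+2), (2*(k:ℝ)) * (aa k * aa (n+1-k))
        = ∑ i ∈ Finset.range (n+1), (2*(i:ℝ)+1) * (aa i * aa (n-i)) := by
      rw [Finset.sum_range_succ' (fun k => (2*(k:ℝ)) * (aa k * aa (n+1-k))) (n+1)]
      simp only [Nat.cast_zero, mul_zero, zero_mul, add_zero, Nat.succ_sub_succ]
      apply Finset.sum_congr rfl
      intro i _
      push_cast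
      have := harec i
      nlinarith [this, aa_pos (n-i)]
    -- symmetrize the odd-coefficient sum
    have refl2 : ∑ i ∈ Finset.range (n+1), (2*((n:ℝ)-(i:ℝ))+1) * (aa i * aa (n-i))
        = ∑ i ∈ Finset.range (n+1), (2*(i:ℝ)+1) * (aa i * aa (n-i)) := by
      rw [← Finset.sum_range_reflect (fun j => (2*(j:ℝ)+1) * (aa j * aa (n-j))) (n+1)]
      apply Finset.sum_congr rfl
      intro j hj
      simp only [Finset.mem_range] at hj
      have h1 : n + 1 - 1 - j = n - j := by omega
      have h2 : n - (n - j) = j := by omega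
      have h3 : ((n - j : ℕ) : ℝ) = (n:ℝ) - (j:ℝ) := by
        push_cast [Nat.cast_sub (by omega : j ≤ n)]
        ring
      rw [h1, h2, h3]
      ring
    have sym : 2 * ∑ i ∈ Finset.range (n+1), (2*(i:ℝ)+1) * (aa i * aa (n-i))
        = (2*(n:ℝ)+2) * ∑ i ∈ Finset.range (n+1), aa i * aa (n-i) := by
      nth_rewrite 1 [two_mul]
      nth_rewrite 1 [← refl2]
      rw [Finset.mul_sum, ← Finset.sum_add_distrib]
      apply Finset.sum_congr rfl
      intro i _
      ring
    have key : (2*((n:ℝ)+1)) * s1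
        = (2*(n:ℝ)+2) * ∑ i ∈ Finset.range (n+1), aa i * aa (n-i) := by
      rw [expand, refl1, shift]
      linarith [sym]
    rw [ih, mul_one] at key
    have hne : (2*((n:ℝ)+1)) ≠ 0 := by positivity
    have : s1 = 1 := by
      have h2 : (2*(n:ℝ)+2) = (2*((n:ℝ)+1)) * 1 := by ring
      rw [h2] at key
      exact mul_left_cancel₀ hne key
    exact this


section Main

variable {q : ℝ} (hq0 : 0 < q) (hq1 : q < 1)

lemma L_le_one : 1 / Real.sqrt (2 * Real.exp 1) ≤ 1 := by
  rw [div_le_one (by positivity)]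
  have h1 : (1:ℝ) ≤ 2 * Real.exp 1 := by nlinarith [Real.add_one_le_exp 1]
  calc (1:ℝ) = Real.sqrt 1 := by simp
    _ ≤ Real.sqrt (2 * Real.exp 1) := Real.sqrt_le_sqrt h1

lemma cc_le_one (y : ℕ) : cc y ≤ 1 := by
  cases y with
  | zero => rw [cc_zero]
  | succ m =>
    have h1 : cc (m+1) = rho (m+1) * aa (m+1) := by
      rw [rho, div_mul_cancel₀]
      exact (aa_pos (m+1)).ne'
    rw [h1]
    have h2 := rho_le (m+1) (by omega)
    have h3 := aa_le_one (m+1)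
    have h4 := (aa_pos (m+1)).le
    have h5 : (0:ℝ) ≤ rho (m+1) := le_of_lt (div_pos (cc_pos _) (aa_pos _))
    nlinarith [L_le_one]

include hq0 hq1 in
lemma summable_aq : Summable (fun y : ℕ => aa y * q ^ y) := by
  apply Summable.of_nonneg_of_le (fun y => mul_nonneg (aa_pos y).le (pow_nonneg hq0.le y))
    (fun y => ?_) (summable_geometric_of_lt_one hq0.le hq1)
  calc aa y * q ^ y ≤ 1 * q ^ y := by
        apply mul_le_mul_of_nonneg_right (aa_le_one y) (pow_nonneg hq0.le y)
    _ = q ^ y := one_mul _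

include hq0 hq1 in
lemma summable_cq : Summable (fun y : ℕ => cc y * q ^ y) := by
  apply Summable.of_nonneg_of_le (fun y => mul_nonneg (cc_pos y).le (pow_nonneg hq0.le y))
    (fun y => ?_) (summable_geometric_of_lt_one hq0.le hq1)
  calc cc y * q ^ y ≤ 1 * q ^ y := by
        apply mul_le_mul_of_nonneg_right (cc_le_one y) (pow_nonneg hq0.le y)
    _ = q ^ y := one_mul _

include hq0 hq1 in
lemma tsum_aq : ∑' y : ℕ, aa y * q ^ y = 1 / Real.sqrt (1 - q) := by
  have hsum := summable_aq hq0 hq1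
  have hnorm : Summable (fun y : ℕ => ‖aa y * q ^ y‖) := by
    apply hsum.congr
    intro y
    rw [Real.norm_eq_abs, abs_of_nonneg (mul_nonneg (aa_pos y).le (pow_nonneg hq0.le y))]
  have hcauchy := tsum_mul_tsum_eq_tsum_sum_range_of_summable_norm hnorm hnorm
  have hinner : ∀ n : ℕ, (∑ k ∈ Finset.range (n+1),
      (aa k * q ^ k) * (aa (n-k) * q ^ (n-k))) = q ^ n := by
    intro n
    have : ∀ k ∈ Finset.range (n+1),
        (aa k * q ^ k) * (aa (n-k) * q ^ (n-k)) = (aa k * aa (n-k)) * q ^ n := by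
      intro k hk
      simp only [Finset.mem_range] at hk
      rw [show n = k + (n - k) by omega]
      rw [show k + (n-k) - k = n - k by omega, pow_add]
      ring
    rw [Finset.sum_congr rfl this, ← Finset.sum_mul, conv n, one_mul]
  have hsq : (∑' y : ℕ, aa y * q ^ y)^2 = (1 - q)⁻¹ := by
    rw [sq, hcauchy, tsum_congr hinner, tsum_geometric_of_lt_one hq0.le hq1]
  have hpos : (0:ℝ) ≤ ∑' y : ℕ, aa y * q ^ y :=
    tsum_nonneg (fun y => mul_nonneg (aa_pos y).le (pow_nonneg hq0.le y))
  calc ∑' y : ℕ, aa y * q ^ y = Real.sqrt ((∑' y : ℕ, aa y * q ^ y)^2) :=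
        (Real.sqrt_sq hpos).symm
    _ = Real.sqrt ((1-q)⁻¹) := by rw [hsq]
    _ = 1 / Real.sqrt (1 - q) := by rw [Real.sqrt_inv, one_div]

end Main

section Final

variable {q : ℝ} (hq0 : 0 < q) (hq1 : q < 1)

lemma S_eq_tsum_cc : S q = ∑' y : ℕ, cc y * q ^ y := by
  apply tsum_congr
  intro y
  rw [cc, div_pow, Real.exp_one_pow, Real.exp_sub]
  have h1 : Real.exp y ≠ 0 := Real.exp_ne_zero _
  have h2 : (y.factorial : ℝ) ≠ 0 := by exact_mod_cast y.factorial_pos.ne'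
  field_simp

include hq0 hq1 in
lemma S_bounds :
    1 + (2 * Real.exp (-(1 + Real.eulerMascheroniConstant))) * (1 / Real.sqrt (1 - q) - 1)
      ≤ S q ∧
    S q ≤ 1 + (1 / Real.sqrt (2 * Real.exp 1)) * (1 / Real.sqrt (1 - q) - 1) := by
  set L : ℝ := 1 / Real.sqrt (2 * Real.exp 1) with hL
  set C : ℝ := 2 * Real.exp (-(1 + Real.eulerMascheroniConstant)) with hC
  have hsc := summable_cq hq0 hq1
  have hsa := summable_aq hq0 hq1
  have hsc' : Summable (fun y : ℕ => cc (y+1) * q ^ (y+1)) :=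
    ((summable_nat_add_iff 1).2 hsc : _)
  have hsa' : Summable (fun y : ℕ => aa (y+1) * q ^ (y+1)) :=
    ((summable_nat_add_iff 1).2 hsa : _)
  have hsplit_c : ∑' y : ℕ, cc y * q ^ y = 1 + ∑' y : ℕ, cc (y+1) * q ^ (y+1) := by
    rw [Summable.tsum_eq_zero_add hsc, cc_zero]
    norm_num
  have hsplit_a : ∑' y : ℕ, aa y * q ^ y = 1 + ∑' y : ℕ, aa (y+1) * q ^ (y+1) := by
    rw [Summable.tsum_eq_zero_add hsa, aa_zero]
    norm_num
  have htail_a : ∑' y : ℕ, aa (y+1) * q ^ (y+1) = 1 / Real.sqrt (1 - q) - 1 := by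
    have := tsum_aq hq0 hq1
    rw [hsplit_a] at this
    linarith
  have hterm : ∀ y : ℕ, cc (y+1) = rho (y+1) * aa (y+1) := by
    intro y
    rw [rho, div_mul_cancel₀]
    exact (aa_pos (y+1)).ne'
  have hhi : ∑' y : ℕ, cc (y+1) * q ^ (y+1) ≤ L * (1 / Real.sqrt (1 - q) - 1) := by
    rw [← htail_a, ← tsum_mul_left]
    apply Summable.tsum_le_tsum _ hsc' (hsa'.mul_left L)
    intro y
    rw [hterm y, ← mul_assoc]
    apply mul_le_mul_of_nonneg_right _ (pow_nonneg hq0.le (y+1))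
    exact mul_le_mul_of_nonneg_right (rho_le (y+1) (by omega)) (aa_pos (y+1)).le
  have hlo : C * (1 / Real.sqrt (1 - q) - 1) ≤ ∑' y : ℕ, cc (y+1) * q ^ (y+1) := by
    rw [← htail_a, ← tsum_mul_left]
    apply Summable.tsum_le_tsum _ (hsa'.mul_left C) hsc'
    intro y
    rw [hterm y, ← mul_assoc]
    apply mul_le_mul_of_nonneg_right _ (pow_nonneg hq0.le (y+1))
    exact mul_le_mul_of_nonneg_right (rho_ge (y+1) (by omega)) (aa_pos (y+1)).le
  rw [S_eq_tsum_cc, hsplit_c]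
  constructor
  · linarith
  · linarith

end Final

/-- For every `q ∈ (0,1)`,
`log(1 + (2/e^{1+γ})·(1/√(1−q) − 1)) ≤ log S(q) ≤ log(1 + (1/√(2e))·(1/√(1−q) − 1))`. -/
theorem stmt4 (q : ℝ) (hq : q ∈ Set.Ioo (0 : ℝ) 1) :
    Real.log (1 + (2 / Real.exp (1 + Real.eulerMascheroniConstant)) *
        (1 / Real.sqrt (1 - q) - 1)) ≤ Real.log (S q) ∧
      Real.log (S q) ≤
        Real.log (1 + (1 / Real.sqrt (2 * Real.exp 1)) * (1 / Real.sqrt (1 - q) - 1)) := by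
  obtain ⟨hq0, hq1⟩ := hq
  obtain ⟨hlo, hhi⟩ := S_bounds hq0 hq1
  have hsq1 : Real.sqrt (1 - q) ≤ 1 := Real.sqrt_le_one.mpr (by linarith)
  have hsq0 : 0 < Real.sqrt (1 - q) := Real.sqrt_pos.2 (by linarith)
  have hone : 1 ≤ 1 / Real.sqrt (1 - q) := by
    rw [le_div_iff₀ hsq0]
    linarith
  have hCeq : 2 / Real.exp (1 + Real.eulerMascheroniConstant)
      = 2 * Real.exp (-(1 + Real.eulerMascheroniConstant)) := by
    rw [Real.exp_neg]
    ring
  rw [hCeq]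
  have hterm : 0 ≤ 2 * Real.exp (-(1 + Real.eulerMascheroniConstant))
      * (1 / Real.sqrt (1 - q) - 1) := by
    apply mul_nonneg (by positivity)
    linarith
  have hposlo : 0 < 1 + 2 * Real.exp (-(1 + Real.eulerMascheroniConstant))
      * (1 / Real.sqrt (1 - q) - 1) := by linarith
  have hSpos : 0 < S q := by linarith
  exact ⟨Real.log_le_log hposlo hlo, Real.log_le_log hSpos hhi⟩
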